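/- Let d be an even positive integer and let P(x) = ∑_{j=0}^{d} a_j x^j be a polynomial with rational coefficients satisfying the palindromic condition a_j = a_{d-j} for all 0 ≤ j ≤ d. For n ≥ 0 and integer k, let A(n,k) denote the coefficient of x^k in P(x)^n · (1 - x^2). Then for every natural number n ≥ 1, twice the sum over k from 0 to dn/2 of A(n,k)·A(n,k+1) equals A(2n, dn-1). -/

import Mathlib

open Polynomial

private lemma reflect_pow_self (f : ℚ[X]) (D : ℕ) (hdeg : f.natDegree ≤ D)
    (hf : reflect D f = f) : ∀ n : ℕ, reflect (D * n) (f ^ n) = f ^ n := by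
  intro n
  induction n with
  | zero => simp [reflect_one]
  | succ n ih =>
    have hdn : (f ^ n).natDegree ≤ D * n :=
      le_trans natDegree_pow_le (by rw [mul_comm D n]; exact Nat.mul_le_mul_left n hdeg)
    have h : reflect (D * n + D) (f ^ n * f) = reflect (D * n) (f ^ n) * reflect D f :=
      reflect_mul _ _ hdn hdeg
    rw [pow_succ, show D * (n + 1) = D * n + D by ring, h, ih, hf]

theorem general_triangle_sum (d : ℕ) (hd_even : Even d) (hd_pos : 0 < d) (a : ℕ → ℚ)
    (hpal : ∀ j ≤ d, a j = a (d - j))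
    (P : ℚ[X]) (hP : P = ∑ j ∈ Finset.range (d + 1), C (a j) * X ^ j)
    (A : ℕ → ℤ → ℚ)
    (hA : ∀ (n : ℕ) (k : ℤ),
      A n k = if k < 0 then 0 else (P ^ n * (1 - X ^ 2)).coeff k.toNat) :
    ∀ n : ℕ, 1 ≤ n →
      2 * ∑ k ∈ Finset.range (d * n / 2 + 1), A n k * A n ((k : ℤ) + 1) =
        A (2 * n) ((d : ℤ) * n - 1) := by
  -- coefficients of P
  have hPcoeff : ∀ j, P.coeff j = if j ≤ d then a j else 0 := by
    intro j
    rw [hP, finset_sum_coeff]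
    simp only [coeff_C_mul, coeff_X_pow, mul_ite, mul_one, mul_zero]
    rw [Finset.sum_ite_eq (Finset.range (d + 1)) j a]
    simp [Finset.mem_range, Nat.lt_succ_iff]
  have hPdeg : P.natDegree ≤ d := by
    apply natDegree_le_iff_coeff_eq_zero.mpr
    intro N hN
    rw [hPcoeff]
    simp [Nat.not_le.mpr hN]
  -- P is self-reciprocal
  have hreflP : reflect d P = P := by
    ext k
    rw [coeff_reflect]
    rcases le_or_gt k d with hk | hk
    · rw [revAt_le hk, hPcoeff, hPcoeff, if_pos (Nat.sub_le d k), if_pos hk, ← hpal k hk]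
    · rw [revAt_eq_self_of_lt hk]
  have h2deg : ((1 : ℚ[X]) - X ^ 2).natDegree ≤ 2 :=
    le_trans (natDegree_sub_le _ _) (by simp [natDegree_X_pow])
  -- anti-palindromy of P^m * (1 - X^2)
  have hanti : ∀ m : ℕ, reflect (d * m + 2) (P ^ m * (1 - X ^ 2)) =
      -(P ^ m * (1 - X ^ 2)) := by
    intro m
    have h1 : (P ^ m).natDegree ≤ d * m :=
      le_trans natDegree_pow_le (by rw [mul_comm d m]; exact Nat.mul_le_mul_left m hPdeg)
    rw [reflect_mul _ _ h1 h2deg, reflect_pow_self P d hPdeg hreflP m]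
    have h3 : reflect 2 ((1 : ℚ[X]) - X ^ 2) = -(1 - X ^ 2) := by
      rw [reflect_sub, reflect_one, reflect_monomial 2 2, revAt_le (le_refl 2)]
      norm_num
    rw [h3]; ring
  intro n hn
  set Q : ℚ[X] := P ^ n * (1 - X ^ 2) with hQdef
  set R : ℚ[X] := P ^ (2 * n) * (1 - X ^ 2) with hRdef
  set m := d * n with hm
  obtain ⟨c, hc⟩ := hd_even
  have hm2 : 2 ≤ m := by
    have : 1 ≤ n := hn
    have : 2 ≤ d := by omega
    calc 2 = 2 * 1 := by ring
    _ ≤ d * n := Nat.mul_le_mul ‹2 ≤ d› hn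
  -- m is even
  obtain ⟨t, ht⟩ : Even m := Even.mul_right ⟨c, hc⟩ n
  have ht1 : 1 ≤ t := by omega
  -- coefficient anti-symmetry for Q
  have hq : ∀ k, k ≤ m + 2 → Q.coeff (m + 2 - k) = -Q.coeff k := by
    intro k hk
    have := congrArg (fun p => Polynomial.coeff p k) (hanti n)
    simp only [coeff_reflect, coeff_neg] at this
    rwa [revAt_le hk] at this
  -- middle coefficient of R vanishes
  have hr : R.coeff (m + 1) = 0 := by
    have := congrArg (fun p => Polynomial.coeff p (m + 1)) (hanti (2 * n))
    simp only [coeff_reflect, coeff_neg] at this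
    have hdm : d * (2 * n) + 2 = 2 * m + 2 := by rw [hm]; ring
    rw [hdm, revAt_le (by omega : m + 1 ≤ 2 * m + 2),
      show 2 * m + 2 - (m + 1) = m + 1 by omega] at this
    linarith
  -- Q * Q = R * (1 - X^2)
  have hQQ : Q * Q = R * (1 - X ^ 2) := by
    rw [hQdef, hRdef, two_mul, pow_add]; ring
  -- coefficient m+1 of R * (1 - X^2)
  have hcoeffR : (R * (1 - X ^ 2)).coeff (m + 1) = -R.coeff (m - 1) := by
    rw [mul_sub, mul_one, coeff_sub, hr, coeff_mul_X_pow',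
      if_pos (by omega : 2 ≤ m + 1), show m + 1 - 2 = m - 1 by omega]
    ring
  -- coefficient m+1 of Q * Q as a convolution sum
  have hconv : (Q * Q).coeff (m + 1) =
      ∑ i ∈ Finset.range (m + 2), Q.coeff i * Q.coeff (m + 1 - i) := by
    rw [coeff_mul, Finset.Nat.sum_antidiagonal_eq_sum_range_succ_mk]
  -- split the sum and use symmetry
  set f : ℕ → ℚ := fun i => Q.coeff i * Q.coeff (m + 1 - i) with hf
  have hsplit : ∑ i ∈ Finset.range (m + 2), f i = 2 * ∑ i ∈ Finset.range (t + 1), f i := by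
    have h1 : ∑ i ∈ Finset.range (m + 2), f i =
        ∑ i ∈ Finset.Ico 0 (t + 1), f i + ∑ i ∈ Finset.Ico (t + 1) (m + 2), f i := by
      rw [Finset.sum_Ico_consecutive _ (Nat.zero_le _) (by omega), ← Finset.range_eq_Ico]
    have h2 : ∑ i ∈ Finset.Ico (t + 1) (m + 2), f i =
        ∑ i ∈ Finset.range (t + 1), f (t + 1 + i) := by
      rw [Finset.sum_Ico_eq_sum_range, show m + 2 - (t + 1) = t + 1 by omega]
    have h3 : ∑ i ∈ Finset.range (t + 1), f (t + 1 + i) =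
        ∑ i ∈ Finset.range (t + 1), f (t + 1 + (t + 1 - 1 - i)) :=
      (Finset.sum_range_reflect (fun i => f (t + 1 + i)) (t + 1)).symm
    have h4 : ∀ i ∈ Finset.range (t + 1), f (t + 1 + (t + 1 - 1 - i)) = f i := by
      intro i hi
      rw [Finset.mem_range] at hi
      have hil : i ≤ t := by omega
      have he : t + 1 + (t + 1 - 1 - i) = m + 1 - i := by omega
      have he2 : m + 1 - (m + 1 - i) = i := by omega
      rw [hf]
      simp only
      rw [he, he2, mul_comm]
    rw [h1, h2, h3, Finset.sum_congr rfl h4, ← Finset.range_eq_Ico, two_mul]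
  -- f i = - Q.coeff i * Q.coeff (i+1) on the half range
  have hfneg : ∀ i ∈ Finset.range (t + 1), f i = -(Q.coeff i * Q.coeff (i + 1)) := by
    intro i hi
    rw [Finset.mem_range] at hi
    have hk : i + 1 ≤ m + 2 := by omega
    have := hq (i + 1) hk
    rw [show m + 2 - (i + 1) = m + 1 - i by omega] at this
    rw [hf]; simp only
    rw [this]; ring
  -- main identity on coefficients
  have hmain : 2 * ∑ i ∈ Finset.range (t + 1), Q.coeff i * Q.coeff (i + 1) =
      R.coeff (m - 1) := by
    have e1 : (Q * Q).coeff (m + 1) = -R.coeff (m - 1) := by rw [hQQ, hcoeffR]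
    rw [hconv, hsplit, Finset.sum_congr rfl hfneg] at e1
    rw [Finset.sum_neg_distrib] at e1
    linarith
  -- translate A into coefficients
  have hAn : ∀ k : ℕ, A n (k : ℤ) = Q.coeff k := by
    intro k
    rw [hA]
    rw [if_neg (by omega), Int.toNat_natCast]
  have hAn' : ∀ k : ℕ, A n ((k : ℤ) + 1) = Q.coeff (k + 1) := by
    intro k
    have : ((k : ℤ) + 1) = ((k + 1 : ℕ) : ℤ) := by push_cast; ring
    rw [this, hAn]
  have hdiv : m / 2 = t := by omega
  have hRHS : A (2 * n) ((d : ℤ) * n - 1) = R.coeff (m - 1) := by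
    rw [hA]
    have hcast : (d : ℤ) * n = (m : ℤ) := by rw [hm]; push_cast; ring
    rw [hcast, if_neg (by omega)]
    congr 1
    omega
  rw [hRHS, hdiv]
  rw [Finset.sum_congr rfl (fun k _ => by rw [hAn k, hAn' k])]
  exact hmain
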